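/- Let X = (x_0, …, x_{d+1}) be a (d+1)-simplex in a real inner product space with all vertices distinct, and suppose the minimum over i=1,…,d+1 of the height of X through x_i is attained (call it h_min). Then h_min ≤ (d+1)·h(X), where h(X) is the minimum height over all d+2 vertices. -/

import Mathlib

/-- Key step: for any `ε > 0` there is `j` with height through `x_{j+1}` at most
`(d+1) * (h_0 + ε)` where `h_0` is the height through `x_0`. -/
theorem stmt_2_key {H : Type*} [NormedAddCommGroup H] [InnerProductSpace ℝ H] (d : ℕ)
    (X : Fin (d + 2) → H) {ε : ℝ} (hε : 0 < ε) :
    ∃ j : Fin (d + 1),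
      Metric.infDist (X j.succ) (affineSpan ℝ (X '' {k | k ≠ j.succ}) : Set H) ≤
        (d + 1) * (Metric.infDist (X 0) (affineSpan ℝ (X '' {k | k ≠ 0}) : Set H) + ε) := by
  classical
  set h0 : ℝ := Metric.infDist (X 0) (affineSpan ℝ (X '' {k | k ≠ 0}) : Set H) with hh0
  have hA0ne : ((affineSpan ℝ (X '' {k | k ≠ (0 : Fin (d+2))}) : Set H)).Nonempty :=
    ⟨X 1, subset_affineSpan _ _ ⟨1, by simp, rfl⟩⟩
  obtain ⟨p, hpA, hpd⟩ := (Metric.infDist_lt_iff hA0ne).1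
    (show h0 < h0 + ε by linarith)
  have himg : X '' {k : Fin (d + 2) | k ≠ 0} = Set.range (fun k : Fin (d + 1) => X k.succ) := by
    ext y
    constructor
    · rintro ⟨k, hk, rfl⟩
      obtain ⟨m, rfl⟩ := Fin.eq_zero_or_eq_succ k |>.resolve_left hk
      exact ⟨m, rfl⟩
    · rintro ⟨m, rfl⟩
      exact ⟨m.succ, Fin.succ_ne_zero m, rfl⟩
  rw [himg] at hpA
  obtain ⟨s, w, hw, hp⟩ := eq_affineCombination_of_mem_affineSpan hpA
  have hsne : s.Nonempty := Finset.nonempty_of_sum_ne_zero (by rw [hw]; norm_num)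
  obtain ⟨j, hjs, hwj⟩ := Finset.exists_le_of_sum_le hsne
    (show ∑ _k ∈ s, (1 / (d + 1 : ℝ)) ≤ ∑ k ∈ s, w k by
      rw [hw, Finset.sum_const, nsmul_eq_mul, mul_one_div, div_le_one (by positivity)]
      have : s.card ≤ d + 1 := by
        simpa using Finset.card_le_univ s
      exact_mod_cast this)
  have hd1 : (0:ℝ) < 1 / (d + 1 : ℝ) := by positivity
  have hwjpos : 0 < w j := lt_of_lt_of_le hd1 hwj
  set c : ℝ := 1 / w j with hc
  have hcpos : 0 < c := by positivity
  have hcle : c ≤ (d + 1 : ℝ) := by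
    rw [hc, div_le_iff₀ hwjpos]
    calc (1:ℝ) = (d+1) * (1/(d+1)) := by field_simp
    _ ≤ (d+1) * w j := by
      apply mul_le_mul_of_nonneg_left hwj (by positivity)
  -- the weights for the new combination, on all of Fin (d+2)
  set W : Fin (d + 2) → ℝ :=
    Fin.cases c (fun k => if k ∈ s.erase j then -(w k) / w j else 0) with hW
  -- the candidate point q in the span of all points except X j.succ
  refine ⟨j, ?_⟩
  set ι := {k : Fin (d + 2) // k ∈ {k : Fin (d+2) | k ≠ j.succ}} with hι
  have hfilter : (Finset.univ.filter (· ∈ {k : Fin (d+2) | k ≠ j.succ}))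
      = Finset.univ.erase j.succ := by
    ext x; simp [Finset.mem_erase, Set.mem_setOf_eq]
  have hsum_sub : ∀ f : Fin (d + 2) → ℝ, ∑ i : ι, f i.val = ∑ k ∈ Finset.univ.erase j.succ, f k :=
    fun f => by
      rw [← hfilter]
      exact (Finset.sum_subtype _ (fun x => by simp) f).symm
  have hsum_subH : ∀ f : Fin (d + 2) → H,
      ∑ i : ι, f i.val = ∑ k ∈ Finset.univ.erase j.succ, f k :=
    fun f => by
      rw [← hfilter]
      exact (Finset.sum_subtype _ (fun x => by simp) f).symm
  have hWsucc : ∀ k : Fin (d+1), W k.succ = if k ∈ s.erase j then -(w k) / w j else 0 := by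
    intro k; simp [hW]
  have hWjsucc : W j.succ = 0 := by
    rw [hWsucc]; simp
  have h3 : ∑ k ∈ s.erase j, w k = 1 - w j := by
    have := Finset.add_sum_erase s w hjs
    rw [hw] at this; linarith
  have hsum_univ : ∑ k : Fin (d + 2), W k = 1 := by
    rw [Fin.sum_univ_succ]
    have h1 : W 0 = c := by simp [hW]
    have h2 : ∑ k : Fin (d+1), W k.succ = (1 - w j) * (-(1 / w j)) := by
      calc ∑ k : Fin (d+1), W k.succ = ∑ k ∈ s.erase j, (-(w k) / w j) := by
            rw [Finset.sum_congr rfl (fun k _ => hWsucc k), Finset.sum_ite_mem,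
              Finset.univ_inter]
        _ = ∑ k ∈ s.erase j, w k * (-(1 / w j)) := by
            apply Finset.sum_congr rfl; intro k _; ring
        _ = (1 - w j) * (-(1 / w j)) := by rw [← Finset.sum_mul, h3]
    rw [h1, h2, hc]
    field_simp
    ring
  have hsum : ∑ i : ι, W i.val = 1 := by
    rw [hsum_sub W, Finset.sum_erase_eq_sub (Finset.mem_univ _), hWjsucc, hsum_univ]
    ring
  set q : H := Finset.univ.affineCombination ℝ (fun i : ι => X i.val) (fun i => W i.val) with hq
  have hqmem : q ∈ (affineSpan ℝ (X '' {k | k ≠ j.succ}) : Set H) := by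
    rw [Set.image_eq_range]
    exact affineCombination_mem_affineSpan hsum _
  -- compute q as a linear combination
  have hqval : q = c • X 0 - c • ∑ k ∈ s.erase j, w k • X k.succ := by
    rw [hq, Finset.affineCombination_eq_linear_combination _ _ _ hsum]
    rw [hsum_subH (fun k => W k • X k)]
    rw [Finset.sum_erase_eq_sub (Finset.mem_univ _), hWjsucc, zero_smul, sub_zero]
    rw [Fin.sum_univ_succ]
    have h1 : (W 0 : ℝ) = c := by simp [hW]
    have h2 : ∑ k : Fin (d+1), W k.succ • X k.succ
        = ∑ k ∈ s.erase j, (-(w k) / w j) • X k.succ := by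
      rw [Finset.sum_congr rfl (fun k _ => by rw [hWsucc])]
      simp only [ite_smul, zero_smul]
      rw [Finset.sum_ite_mem, Finset.univ_inter]
    rw [h1, h2, Finset.smul_sum, sub_eq_add_neg, ← Finset.sum_neg_distrib]
    congr 1
    apply Finset.sum_congr rfl
    intro k _
    rw [smul_smul, ← neg_smul]
    congr 1
    rw [hc]; ring
  have hpval : p = w j • X j.succ + ∑ k ∈ s.erase j, w k • X k.succ := by
    rw [hp, Finset.affineCombination_eq_linear_combination _ _ _ hw,
      ← Finset.add_sum_erase s _ hjs]
  -- X j.succ - q = c • (p - X 0)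
  have hkey : X j.succ - q = c • (p - X 0) := by
    have hcw : c * w j = 1 := by rw [hc]; field_simp
    rw [hqval, hpval]
    rw [smul_sub, smul_add, smul_smul, hcw, one_smul]
    abel
  have hdist : dist (X j.succ) q = c * dist (X 0) p := by
    rw [dist_eq_norm, hkey, norm_smul, Real.norm_eq_abs, abs_of_pos hcpos,
      dist_eq_norm, norm_sub_rev]
  calc Metric.infDist (X j.succ) (affineSpan ℝ (X '' {k | k ≠ j.succ}) : Set H)
      ≤ dist (X j.succ) q := Metric.infDist_le_dist_of_mem hqmem
    _ = c * dist (X 0) p := hdist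
    _ ≤ (d + 1) * (h0 + ε) := by
        apply mul_le_mul hcle (le_of_lt hpd) dist_nonneg (by positivity)

/-- For a `(d+1)`-simplex `X = (x_0, …, x_{d+1})` with distinct vertices in a real
inner product space, the minimum over `i = 1, …, d+1` of the height through `x_i`
is at most `(d+1)` times the minimal height `h(X)` over all `d+2` vertices. -/
theorem stmt_2 {H : Type*} [NormedAddCommGroup H] [InnerProductSpace ℝ H] (d : ℕ)
    (X : Fin (d + 2) → H) (hX : Function.Injective X) :
    (Finset.univ.inf' Finset.univ_nonempty fun i : Fin (d + 1) =>
        Metric.infDist (X i.succ) (affineSpan ℝ (X '' {j | j ≠ i.succ}) : Set H)) ≤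
      (d + 1) *
        (Finset.univ.inf' Finset.univ_nonempty fun i : Fin (d + 2) =>
          Metric.infDist (X i) (affineSpan ℝ (X '' {j | j ≠ i}) : Set H)) := by
  obtain ⟨i0, -, hi0⟩ := Finset.exists_mem_eq_inf' (Finset.univ_nonempty)
    (fun i : Fin (d + 2) =>
      Metric.infDist (X i) (affineSpan ℝ (X '' {j | j ≠ i}) : Set H))
  rw [hi0]
  rcases Fin.eq_zero_or_eq_succ i0 with rfl | ⟨k, rfl⟩
  · -- the minimum is the height through x_0: use the key lemma
    apply le_of_forall_pos_le_add
    intro ε hε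
    have hε' : 0 < ε / (d + 1 : ℝ) := by positivity
    obtain ⟨j, hj⟩ := stmt_2_key d X hε'
    calc (Finset.univ.inf' Finset.univ_nonempty fun i : Fin (d + 1) =>
          Metric.infDist (X i.succ) (affineSpan ℝ (X '' {j | j ≠ i.succ}) : Set H))
        ≤ Metric.infDist (X j.succ) (affineSpan ℝ (X '' {k | k ≠ j.succ}) : Set H) :=
          Finset.inf'_le _ (Finset.mem_univ j)
      _ ≤ (d + 1) * (Metric.infDist (X 0) (affineSpan ℝ (X '' {k | k ≠ 0}) : Set H)
            + ε / (d + 1)) := hj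
      _ = (d + 1) * Metric.infDist (X 0) (affineSpan ℝ (X '' {k | k ≠ 0}) : Set H) + ε := by
          field_simp
  · -- the minimum is a height through some x_{k+1}
    calc (Finset.univ.inf' Finset.univ_nonempty fun i : Fin (d + 1) =>
          Metric.infDist (X i.succ) (affineSpan ℝ (X '' {j | j ≠ i.succ}) : Set H))
        ≤ Metric.infDist (X k.succ) (affineSpan ℝ (X '' {j | j ≠ k.succ}) : Set H) :=
          Finset.inf'_le _ (Finset.mem_univ k)
      _ ≤ (d + 1) * Metric.infDist (X k.succ) (affineSpan ℝ (X '' {j | j ≠ k.succ}) : Set H) := by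
          apply le_mul_of_one_le_left Metric.infDist_nonneg
          have hd : (0:ℝ) ≤ d := Nat.cast_nonneg d
          linarith
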